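/- Let V, W be real Hilbert spaces and T : V → W a bounded linear operator such that for every v ∈ V, ‖T v‖_W equals the infimum of ‖u‖_V over all u ∈ V with T u = T v (the minimum energy extension norm property). Then the range of T is a closed subspace of W. -/

import Mathlib

/-- If a bounded linear operator between Hilbert spaces realizes the minimum energy
extension norm (`‖T v‖` equals the infimum of `‖u‖` over preimages of `T v`),
then its range is closed. -/
theorem range_closed_of_min_energy_norm
    {V W : Type*} [NormedAddCommGroup V] [InnerProductSpace ℝ V] [CompleteSpace V]
    [NormedAddCommGroup W] [InnerProductSpace ℝ W] [CompleteSpace W]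
    (T : V →L[ℝ] W)
    (hmin : ∀ v : V, ‖T v‖ = sInf {r : ℝ | ∃ u : V, T u = T v ∧ r = ‖u‖}) :
    IsClosed (Set.range T) := by
  set K : Submodule ℝ V := LinearMap.ker (T : V →ₗ[ℝ] W) with hK
  haveI : CompleteSpace K := (ContinuousLinearMap.isClosed_ker T).completeSpace_coe
  -- projection of any ker element onto Kᗮ is zero
  have hproj0 : ∀ w : V, w ∈ K → (Submodule.orthogonalProjectionOnto Kᗮ w : V) = 0 := by
    intro w hw
    have := Submodule.orthogonalProjectionOnto_orthogonal_apply_eq_zero (K := K) hw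
    simpa using congrArg (Subtype.val) this
  -- T v = T (proj v)
  have hTproj : ∀ v : V, T (Submodule.orthogonalProjectionOnto Kᗮ v : V) = T v := by
    intro v
    have hmem : v - (Submodule.orthogonalProjectionOnto Kᗮ v : V) ∈ K := by
      rw [Submodule.orthogonalProjectionOnto_orthogonal]
      simpa using (Submodule.orthogonalProjectionOnto K v).2
    have h0 : T (v - (Submodule.orthogonalProjectionOnto Kᗮ v : V)) = 0 := hmem
    have h0' : T v - T (Submodule.orthogonalProjectionOnto Kᗮ v : V) = 0 := by
      rw [← map_sub]; exact h0
    exact (sub_eq_zero.mp h0').symm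
  have key : ∀ v : V, ‖T v‖ = ‖(Submodule.orthogonalProjectionOnto Kᗮ v : V)‖ := by
    intro v
    rw [hmin v]
    set p : V := (Submodule.orthogonalProjectionOnto Kᗮ v : V) with hp
    have hpset : ‖p‖ ∈ {r : ℝ | ∃ u : V, T u = T v ∧ r = ‖u‖} := ⟨p, hTproj v, rfl⟩
    apply le_antisymm
    · apply csInf_le ⟨0, ?_⟩ hpset
      rintro r ⟨u, _, rfl⟩; exact norm_nonneg u
    · apply le_csInf ⟨‖p‖, hpset⟩
      rintro r ⟨u, hu, rfl⟩
      have huv : u - v ∈ K := by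
        have : T (u - v) = 0 := by simp [map_sub, hu]
        exact this
      have hpe : (Submodule.orthogonalProjectionOnto Kᗮ u : V) = p := by
        have h0 := hproj0 _ huv
        have := congrArg (Subtype.val) (map_sub (Submodule.orthogonalProjectionOnto Kᗮ) u v)
        have h2 : (Submodule.orthogonalProjectionOnto Kᗮ u : V) - p = 0 := by
          rw [hp]; rw [← h0] at *; simpa using this.symm.trans h0
        exact sub_eq_zero.mp h2
      calc ‖p‖ = ‖Submodule.orthogonalProjectionOnto Kᗮ u‖ := by rw [← hpe]; rfl
        _ ≤ ‖Submodule.orthogonalProjectionOnto Kᗮ‖ * ‖u‖ := (Submodule.orthogonalProjectionOnto Kᗮ).le_opNorm u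
        _ ≤ 1 * ‖u‖ := by
            exact mul_le_mul_of_nonneg_right (Submodule.orthogonalProjectionOnto_norm_le _) (norm_nonneg u)
        _ = ‖u‖ := one_mul _
  -- T restricted to Kᗮ is a linear isometry
  let Li : Kᗮ →ₗᵢ[ℝ] W :=
    { toLinearMap := (T.comp (Kᗮ.subtypeL)).toLinearMap
      norm_map' := by
        intro x
        have hx : (Submodule.orthogonalProjectionOnto Kᗮ (x : V) : V) = (x : V) := by
          simpa using congrArg Subtype.val
            (Submodule.orthogonalProjectionOnto_mem_subspace_eq_self (K := Kᗮ) x)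
        calc ‖T (x : V)‖ = ‖(Submodule.orthogonalProjectionOnto Kᗮ (x : V) : V)‖ := key _
          _ = ‖(x : V)‖ := by rw [hx]
          _ = ‖x‖ := rfl }
  have hrange : Set.range T = Set.range Li := by
    ext w
    constructor
    · rintro ⟨v, rfl⟩
      exact ⟨Submodule.orthogonalProjectionOnto Kᗮ v, hTproj v⟩
    · rintro ⟨x, rfl⟩
      exact ⟨(x : V), rfl⟩
  rw [hrange]
  exact Li.isometry.isClosedEmbedding.isClosed_range
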